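/- Fix z ∈ ℝ and assume: (a) ∫ f(z,x) dμ(x) < ∞; (b) there exist δ > 0 and a μ-integrable function G with |∂₁f(ζ, x)| ≤ G(x) for all ζ ∈ (z−δ, z+δ) and μ-almost every x; (c) the map x ↦ ∂₁f(z,x)/f(z,x) is antitone (nonincreasing) on [x̲, ∞). Then for every w ≥ x̲ the map ζ ↦ F(w, ζ) is differentiable at z with ∂F(w, z)/∂z ≥ 0, and the derivative is strictly positive if the map in (c) is strictly antitone and 0 < μ((−∞, w]) < 1. -/

import Mathlib

open MeasureTheory Set Filter Metric Topology

private lemma lip_of_ae_deriv_bound {g g' : ℝ → ℝ} {z δ C : ℝ}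
    (hg : ∀ ζ, HasDerivAt g (g' ζ) ζ)
    (hmeas : Measurable g')
    (hbd : ∀ᵐ ζ ∂(volume.restrict (Ioo (z - δ) (z + δ))), |g' ζ| ≤ C) :
    LipschitzOnWith (Real.nnabs C) g (Metric.ball z δ) := by
  rw [Real.ball_eq_Ioo, lipschitzOnWith_iff_dist_le_mul]
  intro a ha b hb
  have hsub : uIoc b a ⊆ Ioo (z - δ) (z + δ) := by
    intro t ht
    exact ⟨lt_of_lt_of_le (lt_min hb.1 ha.1) (le_of_lt ht.1),
      lt_of_le_of_lt ht.2 (max_lt hb.2 ha.2)⟩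
  have hbd' : ∀ᵐ t ∂(volume.restrict (uIoc b a)), ‖g' t‖ ≤ |C| := by
    filter_upwards [ae_restrict_of_ae_restrict_of_subset hsub hbd] with t ht
    exact le_trans ht (le_abs_self C)
  have hint : IntervalIntegrable g' volume b a := by
    rw [intervalIntegrable_iff]
    exact Integrable.mono' (integrableOn_const measure_Ioc_lt_top.ne)
      hmeas.aestronglyMeasurable.restrict hbd'
  have heq : g a - g b = ∫ t in b..a, g' t :=
    (intervalIntegral.integral_eq_sub_of_hasDerivAt (fun t _ => hg t) hint).symm
  have hle : ‖∫ t in b..a, g' t‖ ≤ |∫ _t in b..a, (|C| : ℝ)| :=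
    intervalIntegral.norm_integral_le_abs_of_norm_le hbd' intervalIntegrable_const
  rw [Real.dist_eq, Real.dist_eq, Real.coe_nnabs]
  calc |g a - g b| = ‖∫ t in b..a, g' t‖ := by rw [heq]; rfl
    _ ≤ |∫ _t in b..a, (|C| : ℝ)| := hle
    _ = |C| * |a - b| := by
        rw [intervalIntegral.integral_const, smul_eq_mul, abs_mul, abs_abs, mul_comm]

private lemma meas_f1 {f f₁ : ℝ → ℝ → ℝ}
    (hfmeas : ∀ z, Measurable fun x => f z x)
    (hfderiv : ∀ x z, HasDerivAt (fun ζ => f ζ x) (f₁ z x) z) :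
    Measurable (fun p : ℝ × ℝ => f₁ p.1 p.2) := by
  have hF : Measurable (Function.uncurry f) :=
    measurable_uncurry_of_continuous_of_measurable
      (fun x => continuous_iff_continuousAt.2 fun ζ => (hfderiv x ζ).continuousAt) hfmeas
  apply measurable_of_tendsto_metrizable
    (f := fun (n : ℕ) (p : ℝ × ℝ) =>
      (f (p.1 + ((n : ℝ) + 1)⁻¹) p.2 - f p.1 p.2) / (p.1 + ((n : ℝ) + 1)⁻¹ - p.1))
  · intro n
    exact ((hF.comp ((measurable_fst.add_const _).prodMk measurable_snd)).sub
      (hF.comp (measurable_fst.prodMk measurable_snd))).div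
      ((measurable_fst.add_const _).sub measurable_fst)
  · rw [tendsto_pi_nhds]
    intro p
    have hseq : Tendsto (fun n : ℕ => p.1 + ((n : ℝ) + 1)⁻¹) atTop (𝓝[≠] p.1) := by
      apply tendsto_nhdsWithin_of_tendsto_nhds_of_eventually_within
      · have h0 : Tendsto (fun n : ℕ => ((n : ℝ) + 1)⁻¹) atTop (𝓝 0) := by
          simpa only [one_div] using (tendsto_one_div_add_atTop_nhds_zero_nat : Tendsto (fun n : ℕ => 1 / ((n : ℝ) + 1)) atTop (𝓝 0))
        simpa using tendsto_const_nhds.add h0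
      · filter_upwards with n
        have : (0:ℝ) < ((n : ℝ) + 1)⁻¹ := by positivity
        simp only [mem_compl_iff, mem_singleton_iff]
        intro h
        nlinarith [this]
    have := (hasDerivAt_iff_tendsto_slope.1 (hfderiv p.2 p.1)).comp hseq
    convert this using 2 with n
    simp [slope_def_field, Function.comp]

private lemma deriv_under_integral (ν : Measure ℝ) [IsFiniteMeasure ν]
    {f f₁ : ℝ → ℝ → ℝ} {z δ : ℝ} {G : ℝ → ℝ} (hδ : 0 < δ)
    (hfmeas : ∀ ζ, Measurable fun x => f ζ x)
    (hfderiv : ∀ x ζ, HasDerivAt (fun ζ => f ζ x) (f₁ ζ x) ζ)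
    (hf₁meas : Measurable fun x => f₁ z x)
    (hint : Integrable (fun x => f z x) ν)
    (hG : Integrable G ν)
    (hlip : ∀ᵐ x ∂ν, LipschitzOnWith (Real.nnabs (G x)) (fun ζ => f ζ x) (Metric.ball z δ)) :
    Integrable (fun x => f₁ z x) ν ∧
      HasDerivAt (fun ζ => ∫ x, f ζ x ∂ν) (∫ x, f₁ z x ∂ν) z :=
  hasDerivAt_integral_of_dominated_loc_of_lip (ball_mem_nhds z hδ)
    (Eventually.of_forall fun ζ => (hfmeas ζ).aestronglyMeasurable) hint
    hf₁meas.aestronglyMeasurable hlip hG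
    (Eventually.of_forall fun x => hfderiv x z)

/-- Let `X ≥ x̲` with prior `μ` (`μ([x̲,∞)) = 1`) and let
`f(z,x) > 0` be conditional signal densities, differentiable in the signal
argument with derivative `f₁`. Fix a signal `z` with positive, finite
denominator, and assume: (a) `x ↦ f(z,x)` is `μ`-integrable; (b) a dominated
bound for `f₁` near `z`; (c) `x ↦ f₁(z,x)/f(z,x)` is antitone on `[x̲, ∞)`.
Then for every `w ≥ x̲` the posterior cdf
`ζ ↦ (∫_{(−∞,w]} f(ζ,x) dμ)/(∫_{[x̲,∞)} f(ζ,x) dμ)` is differentiable at `z`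
with nonnegative derivative, and the derivative is strictly positive if the
log-derivative is strictly antitone and `0 < μ((−∞,w]) < 1`. -/
theorem stmt_15 (xlow : ℝ) (μ : Measure ℝ) [IsProbabilityMeasure μ]
    (hμ : μ (Ici xlow) = 1)
    (f f₁ : ℝ → ℝ → ℝ)
    (hfpos : ∀ z x, 0 < f z x)
    (hfmeas : ∀ z, Measurable fun x => f z x)
    (hfderiv : ∀ x z, HasDerivAt (fun ζ => f ζ x) (f₁ z x) z)
    (z : ℝ)
    (ha : Integrable (fun x => f z x) μ)
    (hden : 0 < ∫ x in Ici xlow, f z x ∂μ)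
    (hb : ∃ δ > (0 : ℝ), ∃ G : ℝ → ℝ, Integrable G μ ∧
      ∀ ζ ∈ Ioo (z - δ) (z + δ), ∀ᵐ x ∂μ, |f₁ ζ x| ≤ G x)
    (hc : AntitoneOn (fun x => f₁ z x / f z x) (Ici xlow)) :
    ∀ w, xlow ≤ w → ∃ d : ℝ,
      HasDerivAt
        (fun ζ => (∫ x in Iic w, f ζ x ∂μ) / (∫ x in Ici xlow, f ζ x ∂μ)) d z ∧
      0 ≤ d ∧
      (StrictAntiOn (fun x => f₁ z x / f z x) (Ici xlow) →
        0 < μ (Iic w) → μ (Iic w) < 1 → 0 < d) := by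
  intro w hw
  obtain ⟨δ, hδ, G0, hG0int, hG0bd⟩ := hb
  -- replace G0 by a measurable representative
  set G : ℝ → ℝ := hG0int.aestronglyMeasurable.mk G0 with hGdef
  have hGmeas : Measurable G := hG0int.aestronglyMeasurable.stronglyMeasurable_mk.measurable
  have hGae : G0 =ᵐ[μ] G := hG0int.aestronglyMeasurable.ae_eq_mk
  have hGint : Integrable G μ := hG0int.congr hGae
  have hGbd : ∀ ζ ∈ Ioo (z - δ) (z + δ), ∀ᵐ x ∂μ, |f₁ ζ x| ≤ G x := by
    intro ζ hζ
    filter_upwards [hG0bd ζ hζ, hGae] with x h1 h2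
    rw [← h2]; exact h1
  have hF₁ : Measurable (fun p : ℝ × ℝ => f₁ p.1 p.2) := meas_f1 hfmeas hfderiv
  -- μ-a.e. x lies in [xlow, ∞)
  have hcompl : μ (Ici xlow)ᶜ = 0 := by
    rw [measure_compl measurableSet_Ici (measure_ne_top μ _), hμ, measure_univ, tsub_self]
  have hres : μ.restrict (Ici xlow) = μ := by
    rw [Measure.restrict_congr_set (ae_eq_univ.2 hcompl), Measure.restrict_univ]
  have haeS : ∀ᵐ x ∂μ, x ∈ Ici xlow := by
    rw [ae_iff]; exact hcompl
  -- Fubini swap of the domination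
  have hswap : ∀ᵐ x ∂μ, ∀ᵐ ζ ∂(volume.restrict (Ioo (z - δ) (z + δ))), |f₁ ζ x| ≤ G x := by
    have hmset : MeasurableSet {q : ℝ × ℝ | |f₁ q.1 q.2| ≤ G q.2} :=
      measurableSet_le hF₁.abs (hGmeas.comp measurable_snd)
    refine (Measure.ae_ae_comm (μ := volume.restrict (Ioo (z - δ) (z + δ))) (ν := μ)
      (p := fun ζ x => |f₁ ζ x| ≤ G x) hmset).1 ?_
    refine (ae_restrict_iff' measurableSet_Ioo).2 (ae_of_all _ fun ζ hζ => hGbd ζ hζ)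
  -- a.e. Lipschitz bound on the ball
  have hlip : ∀ᵐ x ∂μ, LipschitzOnWith (Real.nnabs (G x)) (fun ζ => f ζ x) (Metric.ball z δ) := by
    filter_upwards [hswap] with x hx
    exact lip_of_ae_deriv_bound (fun ζ => hfderiv x ζ)
      (hF₁.comp (measurable_id.prodMk measurable_const)) hx
  have hf₁meas : Measurable fun x => f₁ z x :=
    hF₁.comp (measurable_const.prodMk measurable_id)
  -- derivative of numerator and denominator
  obtain ⟨hintN, hderN⟩ := deriv_under_integral (μ.restrict (Iic w)) hδ hfmeas hfderiv hf₁meas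
    ha.restrict hGint.restrict (ae_restrict_of_ae hlip)
  obtain ⟨hintD, hderD⟩ := deriv_under_integral μ hδ hfmeas hfderiv hf₁meas ha hGint hlip
  rw [hres] at hden ⊢
  set N : ℝ := ∫ x in Iic w, f z x ∂μ with hN
  set N' : ℝ := ∫ x in Iic w, f₁ z x ∂μ with hN'
  set D : ℝ := ∫ x, f z x ∂μ with hD
  set D' : ℝ := ∫ x, f₁ z x ∂μ with hD'
  set M : ℝ := ∫ x in Ioi w, f z x ∂μ with hM
  set M' : ℝ := ∫ x in Ioi w, f₁ z x ∂μ with hM'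
  have hsplit : N + M = D := by
    have := integral_add_compl (μ := μ) (s := Iic w) measurableSet_Iic ha
    rwa [compl_Iic] at this
  have hsplit' : N' + M' = D' := by
    have := integral_add_compl (μ := μ) (s := Iic w) measurableSet_Iic hintD
    rwa [compl_Iic] at this
  set c : ℝ := f₁ z w / f z w with hcdef
  have hwS : w ∈ Ici xlow := hw
  -- N' ≥ c * N
  have hNc : c * N ≤ N' := by
    rw [hN', hN, ← integral_const_mul]
    apply integral_mono_ae ((ha.const_mul c).restrict) hintN
    filter_upwards [ae_restrict_of_ae haeS, ae_restrict_mem measurableSet_Iic] with x hxS hxw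
    have := hc hxS hwS hxw
    exact (le_div_iff₀ (hfpos z x)).1 this
  -- M' ≤ c * M
  have hMc : M' ≤ c * M := by
    rw [hM', hM, ← integral_const_mul]
    apply integral_mono_ae (hintD.restrict) ((ha.const_mul c).restrict)
    filter_upwards [ae_restrict_of_ae haeS, ae_restrict_mem measurableSet_Ioi] with x hxS hxw
    have := hc hwS hxS (le_of_lt hxw)
    exact (div_le_iff₀ (hfpos z x)).1 this
  have hN0 : 0 ≤ N := integral_nonneg fun x => (hfpos z x).le
  have hM0 : 0 ≤ M := integral_nonneg fun x => (hfpos z x).le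
  refine ⟨(N' * D - N * D') / D ^ 2, hderN.div hderD (ne_of_gt hden), ?_, ?_⟩
  · apply div_nonneg _ (sq_nonneg D)
    have hrw : N' * D - N * D' = N' * M - N * M' := by rw [← hsplit, ← hsplit']; ring
    rw [hrw]
    nlinarith [hNc, hMc, hN0, hM0]
  · intro hsa hμw hμw1
    -- N > 0
    have hNpos : 0 < N := by
      rw [hN]
      rw [integral_pos_iff_support_of_nonneg_ae (ae_of_all _ fun x => (hfpos z x).le) ha.restrict]
      have : Function.support (fun x => f z x) = univ :=
        eq_univ_of_forall fun x => ne_of_gt (hfpos z x)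
      rw [this, Measure.restrict_apply_univ]
      exact hμw
    -- μ (Ioi w) > 0
    have hIoi : 0 < μ (Ioi w) := by
      rcases eq_or_lt_of_le (zero_le : 0 ≤ μ (Ioi w)) with h | h
      · exfalso
        have h1 : μ (Iic w) + μ (Ioi w) = 1 := by
          have := measure_add_measure_compl (μ := μ) (s := Iic w) measurableSet_Iic
          rwa [compl_Iic, measure_univ] at this
        rw [← h, add_zero] at h1
        exact absurd h1 (ne_of_lt hμw1)
      · exact h
    -- strict: M' < c * M
    have hMc' : M' < c * M := by
      have hpos : ∀ᵐ x ∂(μ.restrict (Ioi w)), 0 < c * f z x - f₁ z x := by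
        filter_upwards [ae_restrict_of_ae haeS, ae_restrict_mem measurableSet_Ioi] with x hxS hxw
        have := hsa hwS hxS hxw
        have h2 : f₁ z x < c * f z x := (div_lt_iff₀ (hfpos z x)).1 this
        linarith
      have hintsub : Integrable (fun x => c * f z x - f₁ z x) (μ.restrict (Ioi w)) :=
        ((ha.const_mul c).sub hintD).restrict
      have hkey : 0 < ∫ x in Ioi w, (c * f z x - f₁ z x) ∂μ := by
        rw [integral_pos_iff_support_of_nonneg_ae (hpos.mono fun x hx => hx.le) hintsub]
        have hm : Measurable fun x => c * f z x - f₁ z x := ((hfmeas z).const_mul c).sub hf₁meas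
        have hms : MeasurableSet (Function.support fun x => c * f z x - f₁ z x) := by
          rw [Function.support_eq_preimage]
          exact hm (measurableSet_singleton 0).compl
        have hsub2 : (Function.support fun x => c * f z x - f₁ z x)ᶜ ⊆
            {x | ¬ (0 < c * f z x - f₁ z x)} := by
          intro x hx
          simp only [Function.mem_support, not_not, mem_compl_iff] at hx
          simp only [mem_setOf_eq, not_lt]
          linarith
        have hc0 : (μ.restrict (Ioi w)) (Function.support fun x => c * f z x - f₁ z x)ᶜ = 0 :=
          measure_mono_null hsub2 (ae_iff.1 hpos)
        have htot := measure_add_measure_compl (μ := μ.restrict (Ioi w)) hms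
        rw [hc0, add_zero, Measure.restrict_apply_univ] at htot
        rw [htot]
        exact hIoi
      have heqint : ∫ x in Ioi w, (c * f z x - f₁ z x) ∂μ = c * M - M' := by
        rw [integral_sub ((ha.const_mul c).restrict) hintD.restrict, integral_const_mul]
      rw [heqint] at hkey
      linarith
    have hnum : 0 < N' * D - N * D' := by
      have hrw : N' * D - N * D' = N' * M - N * M' := by rw [← hsplit, ← hsplit']; ring
      rw [hrw]
      nlinarith [hNc, hMc', hNpos, hM0]
    exact div_pos hnum (by positivity)
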